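/- If X is a w-stable Peano continuum, then for all n ≥ 1, whenever wⁿ(X) is non-empty it has only finitely many connected components, and each of these components is a Peano continuum (i.e., connected, locally path-connected, compact and metrizable). -/

import Mathlib

open Set unitInterval Topology

/-- A point `x` of a topological space `X` is a *wild point* of `X` if every neighborhood `U`
of `x` contains a loop that is not null-homotopic in `X`. -/
def IsWildPoint {X : Type*} [TopologicalSpace X] (x : X) : Prop :=
  ∀ U ∈ 𝓝 x, ∃ (y : X) (γ : Path y y), Set.range ⇑γ ⊆ U ∧ ¬ γ.Homotopic (Path.refl y)

/-- The set of wild points of `X`. -/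
def wildSet (X : Type*) [TopologicalSpace X] : Set X := {x | IsWildPoint x}

/-- Iterated wild sets: `iterWild X 0 = X` and `iterWild X (n+1) = w(iterWild X n)`,
where the wild set of the subspace is taken with the subspace topology. -/
def iterWild (X : Type*) [TopologicalSpace X] : ℕ → Set X
  | 0 => Set.univ
  | n + 1 => Subtype.val '' wildSet ↥(iterWild X n)

/-- The wildness rank of `X`: the least `n` with `iterWild X n = ∅`, and `⊤` if none exists. -/
noncomputable def wildRank (X : Type*) [TopologicalSpace X] : ℕ∞ :=
  sInf ((↑) '' {n : ℕ | iterWild X n = ∅})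

/-- `X` is `w`-stable if every iterated wild set is locally path-connected. -/
def WStable (X : Type*) [TopologicalSpace X] : Prop :=
  ∀ n : ℕ, LocPathConnectedSpace ↥(iterWild X n)

/-- `X` has Lebesgue covering dimension at most one: every open cover admits an open
refinement which covers `X` and in which every point lies in at most two members. -/
def DimLEOne (X : Type*) [TopologicalSpace X] : Prop :=
  ∀ 𝒰 : Set (Set X), (∀ U ∈ 𝒰, IsOpen U) → ⋃₀ 𝒰 = Set.univ →
    ∃ 𝒱 : Set (Set X), (∀ V ∈ 𝒱, IsOpen V) ∧ ⋃₀ 𝒱 = Set.univ ∧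
      (∀ V ∈ 𝒱, ∃ U ∈ 𝒰, V ⊆ U) ∧
      ∀ x : X, ∃ V₁ V₂ : Set X, ∀ V ∈ 𝒱, x ∈ V → V = V₁ ∨ V = V₂

/-- A subset `A ⊆ X` is categorical in `X` if the inclusion `A → X` is homotopic to a
constant map. -/
def IsCategorical (X : Type*) [TopologicalSpace X] (A : Set X) : Prop :=
  ∃ y : X, ContinuousMap.Homotopic
    (⟨Subtype.val, continuous_subtype_val⟩ : C(↥A, X)) (ContinuousMap.const ↥A y)

/-- `A ⊆ X × X` admits a motion plan in `X` if the two coordinate projections `A → X`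
are homotopic. -/
def AdmitsMotionPlan (X : Type*) [TopologicalSpace X] (A : Set (X × X)) : Prop :=
  ContinuousMap.Homotopic
    (⟨fun p : A => (p : X × X).1, continuous_fst.comp continuous_subtype_val⟩ : C(↥A, X))
    (⟨fun p : A => (p : X × X).2, continuous_snd.comp continuous_subtype_val⟩ : C(↥A, X))

/-- The normalized Lusternik–Schnirelmann category of `X`, defined via closed filtrations
`∅ = F₋₁ ⊆ F 0 ⊆ ⋯ ⊆ F n = X` with categorical differences. -/
noncomputable def LSCat (X : Type*) [TopologicalSpace X] : ℕ∞ :=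
  sInf ((↑) '' {n : ℕ | ∃ F : ℕ → Set X, Monotone F ∧ (∀ j, IsClosed (F j)) ∧
    F n = Set.univ ∧ IsCategorical X (F 0) ∧ ∀ j < n, IsCategorical X (F (j + 1) \ F j)})

/-- The normalized topological complexity of `X`, defined via closed filtrations of `X × X`
whose differences admit motion plans. -/
noncomputable def TopComplexity (X : Type*) [TopologicalSpace X] : ℕ∞ :=
  sInf ((↑) '' {n : ℕ | ∃ F : ℕ → Set (X × X), Monotone F ∧ (∀ j, IsClosed (F j)) ∧
    F n = Set.univ ∧ AdmitsMotionPlan X (F 0) ∧ ∀ j < n, AdmitsMotionPlan X (F (j + 1) \ F j)})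

/-- The relative LS-category `cat_X(A)` defined via filtrations of `A` by subsets closed in `A`
whose differences are categorical in `X`. -/
noncomputable def relCat (X : Type*) [TopologicalSpace X] (A : Set X) : ℕ∞ :=
  sInf ((↑) '' {n : ℕ | ∃ F : ℕ → Set X, Monotone F ∧ (∀ j, F j ⊆ A) ∧
    (∀ j, IsClosed ((Subtype.val ⁻¹' F j : Set ↥A))) ∧ F n = A ∧
    IsCategorical X (F 0) ∧ ∀ j < n, IsCategorical X (F (j + 1) \ F j)})

/-- A simple closed curve in `X` is a subspace homeomorphic to the circle. -/
def IsSimpleClosedCurve {X : Type*} [TopologicalSpace X] (S : Set X) : Prop :=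
  Nonempty (↥S ≃ₜ Circle)

/-- A continuous map is `π₁`-injective if every based loop whose image is null-homotopic is
itself null-homotopic (equivalently, the induced homomorphism on fundamental groups is
injective at every basepoint). -/
def Pi1Injective {X Y : Type*} [TopologicalSpace X] [TopologicalSpace Y] (f : C(X, Y)) : Prop :=
  ∀ (x : X) (γ : Path x x), (γ.map f.continuous).Homotopic (Path.refl (f x)) →
    γ.Homotopic (Path.refl x)


lemma isClosed_wildSet (Y : Type*) [TopologicalSpace Y] : IsClosed (wildSet Y) := by
  rw [← isOpen_compl_iff, isOpen_iff_mem_nhds]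
  intro x hx
  simp only [mem_compl_iff, wildSet, mem_setOf_eq, IsWildPoint] at hx
  push_neg at hx
  obtain ⟨U, hU, hUgood⟩ := hx
  filter_upwards [interior_mem_nhds.mpr hU] with y hy hywild
  obtain ⟨z, γ, hr, hnh⟩ := hywild U
    (mem_nhds_iff.mpr ⟨interior U, interior_subset, isOpen_interior, hy⟩)
  exact hnh (hUgood z γ hr)

lemma isClosed_iterWild (Y : Type*) [TopologicalSpace Y] : ∀ n, IsClosed (iterWild Y n)
  | 0 => isClosed_univ
  | n + 1 =>
    (isClosed_iterWild Y n).isClosedEmbedding_subtypeVal.isClosedMap _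
      (isClosed_wildSet ↥(iterWild Y n))

lemma finite_connectedComponents (Y : Type*) [TopologicalSpace Y] [CompactSpace Y]
    [LocallyConnectedSpace Y] : Finite (ConnectedComponents Y) := by
  have hd : DiscreteTopology (ConnectedComponents Y) := by
    rw [discreteTopology_iff_isOpen_singleton]
    intro a
    obtain ⟨x, rfl⟩ := ConnectedComponents.surjective_coe a
    rw [← (ConnectedComponents.isQuotientMap_coe).isOpen_preimage,
      connectedComponents_preimage_singleton]
    exact isOpen_connectedComponent
  have hc : CompactSpace (ConnectedComponents Y) := by
    constructor
    rw [← ConnectedComponents.range_coe]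
    exact isCompact_range ConnectedComponents.continuous_coe
  exact finite_of_compact_of_discrete

/-- If `X` is a `w`-stable Peano continuum, then for all `n ≥ 1`, whenever `wⁿ(X)` is nonempty
it has finitely many connected components, each of which is a Peano continuum. -/
theorem iterWild_components_peano (X : Type*) [TopologicalSpace X] [ConnectedSpace X]
    [LocallyPathConnectedSpace X] [CompactSpace X] [TopologicalSpace.MetrizableSpace X]
    (hst : WStable X) (n : ℕ) (hn : 1 ≤ n) (hne : (iterWild X n).Nonempty) :
    Finite (ConnectedComponents ↥(iterWild X n)) ∧
    ∀ x : ↥(iterWild X n),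
      ConnectedSpace ↥(connectedComponent x) ∧
      LocPathConnectedSpace ↥(connectedComponent x) ∧
      CompactSpace ↥(connectedComponent x) ∧
      TopologicalSpace.MetrizableSpace ↥(connectedComponent x) := by
  
  have hclosed : IsClosed (iterWild X n) := isClosed_iterWild X n
  haveI : CompactSpace ↥(iterWild X n) := isCompact_iff_compactSpace.mp hclosed.isCompact
  haveI : LocallyPathConnectedSpace ↥(iterWild X n) := hst n
  refine ⟨finite_connectedComponents _, fun x => ?_⟩
  refine ⟨?_, isOpen_connectedComponent.locPathConnectedSpace, ?_, inferInstance⟩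
  · exact Subtype.connectedSpace isConnected_connectedComponent
  · exact isCompact_iff_compactSpace.mp isClosed_connectedComponent.isCompact
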